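/- Suppose H : 𝕋^d × ℝ^d × (0,∞) → ℝ and B : 𝕋^d × ℝ^d × (0,∞) → ℝ^d are C² with H_m < 0, and for each (x,p) the map m ↦ H(x,p,m) is a bijection of (0,∞) onto ℝ with inverse H⁻¹(x,p,·). Define b(x,p,s) = −D_xH·B_m + H_m div_xB, where all derivatives of H and B are evaluated at (x,p,H⁻¹(x,p,s)), and set ζ(p,s) = −s + D_pH(x,p,H⁻¹(x,p,s))·p. Then for every (x,p,s), writing m = H⁻¹(x,p,s) and q = (p,s), the directional derivative of b in the gradient variables satisfies: D_q b(x,p,s)·q = −B_m·( D²_{px}H pᵀ − (D_xH_m)ᵀ H_m⁻¹ ζ ) − D_xH·( D_pB_m pᵀ − (B_{mm})ᵀ H_m⁻¹ ζ ) + H_m( D_p(div_xB)·p − div_xB_m · H_m⁻¹ ζ ) + div_xB ( D_pH_m·p − H_{mm} H_m⁻¹ ζ ), with all derivatives of H and B on the right-hand side evaluated at (x,p,m). -/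

import Mathlib

open Set Function MeasureTheory Filter
open scoped Topology

noncomputable section

/-- `Ed d` is the ambient Euclidean space `ℝ^d`; the flat torus `𝕋^d` is modeled by
`ℤ^d`-periodic functions on `Ed d`. -/
abbrev Ed (d : ℕ) := EuclideanSpace ℝ (Fin d)

namespace EMFG

variable {d : ℕ}

/-- Euclidean scalar product. -/
def dotE {d : ℕ} (u v : Ed d) : ℝ := inner ℝ u v

/-- Periodicity with respect to the standard integer lattice: a function on `ℝ^d`
descends to the torus `𝕋^d`. -/
def XPeriodic {α : Type*} (f : Ed d → α) : Prop :=
  ∀ (x : Ed d) (i : Fin d), f (x + EuclideanSpace.single i (1:ℝ)) = f x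

/-! Partial derivatives of a scalar Hamiltonian `H = H(x,p,m)`. -/

/-- `H_m` -/
def dm (H : Ed d → Ed d → ℝ → ℝ) (x p : Ed d) (m : ℝ) : ℝ :=
  deriv (fun m' => H x p m') m

/-- `H_{mm}` -/
def dmm (H : Ed d → Ed d → ℝ → ℝ) (x p : Ed d) (m : ℝ) : ℝ :=
  deriv (fun m' => dm H x p m') m

/-- `D_p H` (as a vector). -/
def gradp (H : Ed d → Ed d → ℝ → ℝ) (x p : Ed d) (m : ℝ) : Ed d :=
  gradient (fun p' => H x p' m) p

/-- `D_x H` (as a vector). -/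
def gradx (H : Ed d → Ed d → ℝ → ℝ) (x p : Ed d) (m : ℝ) : Ed d :=
  gradient (fun x' => H x' p m) x

/-- `D²_{pp} H` -/
def hesspp (H : Ed d → Ed d → ℝ → ℝ) (x p : Ed d) (m : ℝ) : Ed d →L[ℝ] Ed d :=
  fderiv ℝ (fun p' => gradp H x p' m) p

/-- `D²_{xx} H` -/
def hessxx (H : Ed d → Ed d → ℝ → ℝ) (x p : Ed d) (m : ℝ) : Ed d →L[ℝ] Ed d :=
  fderiv ℝ (fun x' => gradx H x' p m) x

/-- `D²_{xp} H` -/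
def hessxp (H : Ed d → Ed d → ℝ → ℝ) (x p : Ed d) (m : ℝ) : Ed d →L[ℝ] Ed d :=
  fderiv ℝ (fun x' => gradp H x' p m) x

/-- `D_p H_m` -/
def gradpdm (H : Ed d → Ed d → ℝ → ℝ) (x p : Ed d) (m : ℝ) : Ed d :=
  gradient (fun p' => dm H x p' m) p

/-- `D_x H_m` -/
def gradxdm (H : Ed d → Ed d → ℝ → ℝ) (x p : Ed d) (m : ℝ) : Ed d :=
  gradient (fun x' => dm H x' p m) x

/-! Partial derivatives of a vector field `B = B(x,p,m) ∈ ℝ^d`. -/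

/-- `B_m` -/
def vdm (B : Ed d → Ed d → ℝ → Ed d) (x p : Ed d) (m : ℝ) : Ed d :=
  deriv (fun m' => B x p m') m

/-- `B_{mm}` -/
def vdmm (B : Ed d → Ed d → ℝ → Ed d) (x p : Ed d) (m : ℝ) : Ed d :=
  deriv (fun m' => vdm B x p m') m

/-- `D_p B` -/
def jacp (B : Ed d → Ed d → ℝ → Ed d) (x p : Ed d) (m : ℝ) : Ed d →L[ℝ] Ed d :=
  fderiv ℝ (fun p' => B x p' m) p

/-- `D_x B` -/
def jacx (B : Ed d → Ed d → ℝ → Ed d) (x p : Ed d) (m : ℝ) : Ed d →L[ℝ] Ed d :=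
  fderiv ℝ (fun x' => B x' p m) x

/-- `D_p B_m` -/
def jacpdm (B : Ed d → Ed d → ℝ → Ed d) (x p : Ed d) (m : ℝ) : Ed d →L[ℝ] Ed d :=
  fderiv ℝ (fun p' => vdm B x p' m) p

/-- `D_x B_m` -/
def jacxdm (B : Ed d → Ed d → ℝ → Ed d) (x p : Ed d) (m : ℝ) : Ed d →L[ℝ] Ed d :=
  fderiv ℝ (fun x' => vdm B x' p m) x

/-- `D²_{pp} B` -/
def hessppB (B : Ed d → Ed d → ℝ → Ed d) (x p : Ed d) (m : ℝ) :
    Ed d →L[ℝ] Ed d →L[ℝ] Ed d :=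
  fderiv ℝ (fun p' => jacp B x p' m) p

/-- `D²_{xx} B` -/
def hessxxB (B : Ed d → Ed d → ℝ → Ed d) (x p : Ed d) (m : ℝ) :
    Ed d →L[ℝ] Ed d →L[ℝ] Ed d :=
  fderiv ℝ (fun x' => jacx B x' p m) x

/-- `D²_{xp} B` -/
def hessxpB (B : Ed d → Ed d → ℝ → Ed d) (x p : Ed d) (m : ℝ) :
    Ed d →L[ℝ] Ed d →L[ℝ] Ed d :=
  fderiv ℝ (fun x' => jacp B x' p m) x

/-- `div_x B` (at frozen `p`, `m`). -/
def divx (B : Ed d → Ed d → ℝ → Ed d) (x p : Ed d) (m : ℝ) : ℝ :=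
  ∑ i, (jacx B x p m (EuclideanSpace.single i (1:ℝ))) i

/-- The time derivative `u_t`, taken within the time interval `[0,T]`. -/
def tderiv (T : ℝ) (u : Ed d → ℝ → ℝ) (x : Ed d) (t : ℝ) : ℝ :=
  derivWithin (u x) (Icc 0 T) t

/-- The spatial gradient `D_x u`. -/
def sgrad (u : Ed d → ℝ → ℝ) (x : Ed d) (t : ℝ) : Ed d :=
  gradient (fun x' => u x' t) x

/-- The closed cylinder `Q̄_T = 𝕋^d × [0,T]` (lifted to `ℝ^d × [0,T]`). -/
def QTbar (d : ℕ) (T : ℝ) : Set (Ed d × ℝ) := univ ×ˢ Icc 0 T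

/-- `u ∈ C^n(Q̄_T)`. -/
def RegOn (n : ℕ) (T : ℝ) (u : Ed d → ℝ → ℝ) : Prop :=
  ContDiffOn ℝ n (fun z : Ed d × ℝ => u z.1 z.2) (QTbar d T)

/-- `u ∈ C^{k,s}(Q̄_T)`: `k` times continuously differentiable with `s`-Hölder
continuous `k`-th order derivatives. -/
def HolderRegOn (k : ℕ) (s T : ℝ) (u : Ed d → ℝ → ℝ) : Prop :=
  RegOn k T u ∧ ∃ C : NNReal,
    HolderOnWith C s.toNNReal
      (iteratedFDerivWithin ℝ k (fun z : Ed d × ℝ => u z.1 z.2) (QTbar d T)) (QTbar d T)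

/-- The full data and standing assumptions (M), (H), (B), (G), (E) of the paper,
together with the normalizations of Remark 2.1. -/
structure Setup (d : ℕ) where
  /-- the time horizon -/
  T : ℝ
  T_pos : 0 < T
  /-- the structural constant `C₀` -/
  C₀ : ℝ
  C₀_pos : 0 < C₀
  /-- growth exponents -/
  γ : ℝ
  γ₁ : ℝ
  γ₂ : ℝ
  hγ : 1 < γ
  hγ₁ : 0 ≤ γ₁
  hγ₂₁ : γ₂ ≤ γ₁
  hγ₁γ : γ₁ ≤ γ
  hγ₂ : γ₂ < 2 * γ₁ - γ + 2
  /-- the structural functions `C̄` and `ψ` on `(0,∞)` -/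
  Cb : ℝ → ℝ
  ψ : ℝ → ℝ
  Cb_pos : ∀ m : ℝ, 0 < m → 0 < Cb m
  ψ_pos : ∀ m : ℝ, 0 < m → 0 < ψ m
  Cb_cont : ContinuousOn Cb (Ioi 0)
  ψ_cont : ContinuousOn ψ (Ioi 0)
  ψ_mono : ∀ m₁ m₂ : ℝ, 0 < m₁ → m₁ ≤ m₂ → ψ m₂ ≤ ψ m₁
  ψ_lim : γ₁ < γ → ∃ ℓ : ℝ, 0 < ℓ ∧ Tendsto ψ atTop (𝓝 ℓ)
  /-- the initial density -/
  m₀ : Ed d → ℝ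
  m₀_per : XPeriodic m₀
  m₀_smooth : ContDiff ℝ 4 m₀
  m₀_pos : ∀ x, 0 < m₀ x
  m₀_int : ∫ x in {x : Ed d | ∀ i, x i ∈ Icc (0:ℝ) 1}, m₀ x = 1
  /-- the Hamiltonian -/
  H : Ed d → Ed d → ℝ → ℝ
  H_per : ∀ (p : Ed d) (m : ℝ), XPeriodic (fun x => H x p m)
  H_smooth : ContDiffOn ℝ 4 (fun z : Ed d × Ed d × ℝ => H z.1 z.2.1 z.2.2)
      (univ ×ˢ univ ×ˢ Ioi 0)
  Hm_neg : ∀ (x p : Ed d) (m : ℝ), 0 < m → dm H x p m < 0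
  H1 : ∀ (x p : Ed d) (m : ℝ), 0 < m → ∀ ξ : Ed d,
      C₀⁻¹ * ψ m * (1 + ‖p‖) ^ (γ - 2) * ‖ξ‖ ^ 2 ≤ dotE (hesspp H x p m ξ) ξ ∧
      dotE (hesspp H x p m ξ) ξ ≤ C₀ * ψ m * (1 + ‖p‖) ^ (γ - 2) * ‖ξ‖ ^ 2
  H2a : ∀ (x p : Ed d) (m : ℝ), 0 < m →
      ‖gradp H x p m‖ ≤ C₀ * ψ m * (1 + ‖p‖) ^ (γ - 1)
  H2b : ∀ (x p : Ed d) (m : ℝ), 0 < m →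
      (1 + C₀⁻¹) * H x p m - Cb m ≤ dotE (gradp H x p m) p
  HM1 : ∀ (x p : Ed d) (m : ℝ), 0 < m →
      C₀⁻¹ * ψ m * ‖p‖ ^ γ₁ ≤ -(m * dm H x p m) ∧
      -(m * dm H x p m) ≤ C₀ * ψ m * ‖p‖ ^ γ₁ + Cb m
  HM2 : ∀ (x p : Ed d) (m : ℝ), 0 < m →
      |m * dmm H x p m| ≤ -(C₀ * dm H x p m) ∧
      ‖p‖ * ‖gradpdm H x p m‖ ≤ -(C₀ * dm H x p m)
  HX1 : ∀ (x p : Ed d) (m : ℝ), 0 < m →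
      ‖gradx H x p m‖ ≤ C₀ * ψ m * (1 + ‖p‖) ^ γ₂ ∧
      ‖hessxx H x p m‖ ≤ C₀ * ψ m * (1 + ‖p‖) ^ γ₂ ∧
      ‖hessxp H x p m‖ ≤ C₀ * ψ m * (1 + ‖p‖) ^ (γ₂ - 1)
  HX2 : ∀ (x p : Ed d) (m : ℝ), 0 < m →
      m * ‖gradxdm H x p m‖ ≤ C₀ * ψ m * (1 + ‖p‖) ^ γ₂
  HX3 : ∀ (x : Ed d) (m : ℝ), 0 < m → ‖gradx H x 0 m‖ ≤ C₀
  /-- the drift vector field -/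
  B : Ed d → Ed d → ℝ → Ed d
  B_per : ∀ (p : Ed d) (m : ℝ), XPeriodic (fun x => B x p m)
  B_smooth : ContDiffOn ℝ 4 (fun z : Ed d × Ed d × ℝ => B z.1 z.2.1 z.2.2)
      (univ ×ˢ univ ×ˢ Ici 0)
  B_zero : ∀ x p : Ed d, B x p 0 = 0
  B1 : ∀ (x p : Ed d) (m : ℝ), 0 < m → ∀ ξ : Ed d,
      C₀⁻¹ * m * ψ m * ‖p‖ ^ (γ - 2) * ‖ξ‖ ^ 2 ≤ dotE (jacp B x p m ξ) ξ ∧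
      dotE (jacp B x p m ξ) ξ ≤ C₀ * m * ψ m * (1 + ‖p‖) ^ (γ - 2) * ‖ξ‖ ^ 2
  B2 : ∀ (x p : Ed d) (m : ℝ), 0 < m →
      ‖vdm B x p m‖ ≤ C₀ * ψ m * (1 + ‖p‖) ^ (γ - 1) ∧
      ‖jacpdm B x p m‖ ≤ C₀ * ψ m * (1 + ‖p‖) ^ (γ - 2) ∧
      ‖hessppB B x p m‖ ≤ C₀ * m * ψ m * (1 + ‖p‖) ^ (γ - 3)
  BM : ∀ (x p : Ed d) (m : ℝ), 0 < m →
      ‖vdmm B x p m‖ ≤ -(C₀ * (1 + ‖p‖) * dm H x p m)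
  BX1 : ∀ (x p : Ed d) (m : ℝ), 0 < m →
      ‖jacx B x p m‖ ≤ C₀ * m * ψ m * (1 + ‖p‖) ^ (γ₂ - 1) ∧
      ‖hessxxB B x p m‖ ≤ C₀ * m * ψ m * (1 + ‖p‖) ^ (γ₂ - 1) ∧
      ‖jacxdm B x p m‖ ≤ C₀ * ψ m * (1 + ‖p‖) ^ (γ₂ - 1)
  BX2 : ∀ (x p : Ed d) (m : ℝ), 0 < m →
      ‖hessxpB B x p m‖ ≤ C₀ * m * ψ m * (1 + ‖p‖) ^ (γ₂ - 2)
  BX3 : ∀ (x : Ed d) (m : ℝ), 0 < m → ‖jacx B x 0 m‖ ≤ C₀ * m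
  /-- the terminal coupling -/
  g : Ed d → ℝ → ℝ
  g_per : ∀ m : ℝ, XPeriodic (fun x => g x m)
  g_smooth : ContDiffOn ℝ 4 (fun z : Ed d × ℝ => g z.1 z.2) (univ ×ˢ Ioi 0)
  gm_pos : ∀ (x : Ed d) (m : ℝ), 0 < m → 0 < deriv (g x) m
  /-- `sup g` and `inf g`: the common limits of `g(x,·)` at `∞` and `0⁺` (assumption (G)) -/
  gSup : ℝ
  gInf : ℝ
  g_lim_top : ∀ x : Ed d, Tendsto (g x) atTop (𝓝 gSup)
  g_lim_bot : ∀ x : Ed d, Tendsto (g x) (𝓝[>] 0) (𝓝 gInf)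
  /-- (E1) -/
  E1 : ∀ M : ℝ, ∃ δ : ℝ, 0 < δ ∧ ∀ (x p : Ed d) (m : ℝ), 0 < m → m < δ → M ≤ H x p m
  /-- (E2) -/
  E2 : ∀ M : ℝ, ∃ R : ℝ, ∀ (x p : Ed d) (m : ℝ), 0 < m → R ≤ m →
      H x p m - C₀ * ψ m * ‖p‖ ^ γ ≤ -M
  /-- (E3), strict form of the uniqueness condition -/
  E3 : ∀ (x p : Ed d) (m : ℝ), 0 < m → ∀ ξ : Ed d, ξ ≠ 0 →
      (1 + C₀⁻¹) * (dotE (vdm B x p m - gradp H x p m) ξ) ^ 2 <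
        -(4 * dm H x p m) * dotE (jacp B x p m ξ) ξ
  /-- normalization (2.4) -/
  Hgrowth : ∀ (x p : Ed d) (m : ℝ), 0 < m →
      C₀⁻¹ * ψ m * ‖p‖ ^ γ - Cb m ≤ H x p m ∧ H x p m ≤ C₀ * ψ m * ‖p‖ ^ γ + Cb m
  /-- normalization (2.5) -/
  Hnorm : ∀ (x : Ed d) (m : ℝ), m ∈ Icc (⨅ y, m₀ y) (⨆ y, m₀ y) → |H x 0 m| ≤ C₀
  Bnorm : ∀ (x : Ed d) (m : ℝ), m ∈ Icc (⨅ y, m₀ y) (⨆ y, m₀ y) → ‖B x 0 m‖ ≤ C₀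

/-- `(u,m)` is a classical solution of the (EMFG) system (regularity stated separately). -/
structure IsSol (S : Setup d) (u m : Ed d → ℝ → ℝ) : Prop where
  u_per : ∀ t : ℝ, XPeriodic (fun x => u x t)
  m_per : ∀ t : ℝ, XPeriodic (fun x => m x t)
  m_pos : ∀ (x : Ed d) (t : ℝ), t ∈ Icc 0 S.T → 0 < m x t
  hjb : ∀ (x : Ed d) (t : ℝ), t ∈ Ioo 0 S.T →
      -(tderiv S.T u x t) + S.H x (sgrad u x t) (m x t) = 0
  kfp : ∀ (x : Ed d) (t : ℝ), t ∈ Ioo 0 S.T →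
      tderiv S.T m x t -
        ∑ i, ((fderiv ℝ (fun x' => S.B x' (sgrad u x' t) (m x' t)) x)
          (EuclideanSpace.single i (1:ℝ))) i = 0
  init : ∀ x : Ed d, m x 0 = S.m₀ x
  term : ∀ x : Ed d, u x S.T = S.g x (m x S.T)

end EMFG

namespace EMFG

/-- `D²_{px}H`: the derivative in `p` of `D_xH`. -/
def hesspx {d : ℕ} (H : Ed d → Ed d → ℝ → ℝ) (x p : Ed d) (m : ℝ) : Ed d →L[ℝ] Ed d :=
  fderiv ℝ (fun p' => gradx H x p' m) p

/-- `div_x B_m`. -/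
def divxdm {d : ℕ} (B : Ed d → Ed d → ℝ → Ed d) (x p : Ed d) (m : ℝ) : ℝ :=
  ∑ i, (jacxdm B x p m (EuclideanSpace.single i (1:ℝ))) i

/-- The first order coefficient `b(x,p,s) = −D_xH·B_m + H_m div_xB`, all derivatives
evaluated at `(x,p,H⁻¹(x,p,s))`. -/
def bQ {d : ℕ} (H : Ed d → Ed d → ℝ → ℝ) (B : Ed d → Ed d → ℝ → Ed d)
    (Hinv : Ed d → Ed d → ℝ → ℝ) (x p : Ed d) (s : ℝ) : ℝ :=
  -(dotE (gradx H x p (Hinv x p s)) (vdm B x p (Hinv x p s))) +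
    dm H x p (Hinv x p s) * divx B x p (Hinv x p s)

section AuxEMFG
abbrev Fsp (d : ℕ) := Ed d × Ed d × ℝ

variable {d : ℕ} {G : Type*} [NormedAddCommGroup G] [NormedSpace ℝ G]

/-- embedding q ↦ (x, q) -/
lemma hasFDerivAt_iotaPM (x p : Ed d) (m : ℝ) :
    HasFDerivAt (fun q : Ed d × ℝ => ((x, q.1, q.2) : Fsp d))
      (ContinuousLinearMap.inr ℝ (Ed d) (Ed d × ℝ)) (p, m) := by
  have h := HasFDerivAt.prodMk ((hasFDerivAt_const x ((p,m) : Ed d × ℝ)) :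
      HasFDerivAt _ (0 : (Ed d × ℝ) →L[ℝ] Ed d) _) (hasFDerivAt_id (p,m))
  exact h

lemma hasFDerivAt_iotaX (x p : Ed d) (m : ℝ) :
    HasFDerivAt (fun x' : Ed d => ((x', p, m) : Fsp d))
      (ContinuousLinearMap.inl ℝ (Ed d) (Ed d × ℝ)) x := by
  have h := HasFDerivAt.prodMk (hasFDerivAt_id x)
    ((hasFDerivAt_const ((p,m) : Ed d × ℝ) x) : HasFDerivAt _ (0 : Ed d →L[ℝ] Ed d × ℝ) _)
  exact h

lemma hasFDerivAt_iotaP (x p : Ed d) (m : ℝ) :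
    HasFDerivAt (fun p' : Ed d => ((x, p', m) : Fsp d))
      ((ContinuousLinearMap.inr ℝ (Ed d) (Ed d × ℝ)).comp
        (ContinuousLinearMap.inl ℝ (Ed d) ℝ)) p := by
  have h := HasFDerivAt.prodMk ((hasFDerivAt_const x p) : HasFDerivAt _ (0 : Ed d →L[ℝ] Ed d) _)
    (HasFDerivAt.prodMk (hasFDerivAt_id p) ((hasFDerivAt_const m p) : HasFDerivAt _ (0 : Ed d →L[ℝ] ℝ) _))
  exact h

lemma hasDerivAt_iotaM (x p : Ed d) (m : ℝ) :
    HasDerivAt (fun m' : ℝ => ((x, p, m') : Fsp d)) ((0, 0, 1) : Fsp d) m := by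
  have h := HasDerivAt.prodMk (hasDerivAt_const m x) (HasDerivAt.prodMk (hasDerivAt_const m p) (hasDerivAt_id m))
  exact h

lemma hasFDerivAt_slicePM (f : Fsp d → G) {x p : Ed d} {m : ℝ}
    (hf : DifferentiableAt ℝ f (x, p, m)) :
    HasFDerivAt (fun q : Ed d × ℝ => f (x, q.1, q.2))
      ((fderiv ℝ f (x, p, m)).comp (ContinuousLinearMap.inr ℝ (Ed d) (Ed d × ℝ)))
      (p, m) :=
  hf.hasFDerivAt.comp (p, m) (hasFDerivAt_iotaPM x p m)

lemma hasFDerivAt_sliceX (f : Fsp d → G) {x p : Ed d} {m : ℝ}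
    (hf : DifferentiableAt ℝ f (x, p, m)) :
    HasFDerivAt (fun x' : Ed d => f (x', p, m))
      ((fderiv ℝ f (x, p, m)).comp (ContinuousLinearMap.inl ℝ (Ed d) (Ed d × ℝ))) x :=
  hf.hasFDerivAt.comp x (hasFDerivAt_iotaX x p m)

lemma hasFDerivAt_sliceP (f : Fsp d → G) {x p : Ed d} {m : ℝ}
    (hf : DifferentiableAt ℝ f (x, p, m)) :
    HasFDerivAt (fun p' : Ed d => f (x, p', m))
      ((fderiv ℝ f (x, p, m)).comp
        ((ContinuousLinearMap.inr ℝ (Ed d) (Ed d × ℝ)).comp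
          (ContinuousLinearMap.inl ℝ (Ed d) ℝ))) p :=
  hf.hasFDerivAt.comp p (hasFDerivAt_iotaP x p m)

lemma hasDerivAt_sliceM (f : Fsp d → G) {x p : Ed d} {m : ℝ}
    (hf : DifferentiableAt ℝ f (x, p, m)) :
    HasDerivAt (fun m' : ℝ => f (x, p, m')) (fderiv ℝ f (x, p, m) (0, 0, 1)) m :=
  hf.hasFDerivAt.comp_hasDerivAt m (hasDerivAt_iotaM x p m)


lemma gradient_sliceX_eq (f : Fsp d → ℝ) {x p : Ed d} {m : ℝ}
    (hf : DifferentiableAt ℝ f (x, p, m)) :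
    gradient (fun x' : Ed d => f (x', p, m)) x =
      (InnerProductSpace.toDual ℝ (Ed d)).symm
        ((fderiv ℝ f (x, p, m)).comp (ContinuousLinearMap.inl ℝ (Ed d) (Ed d × ℝ))) :=
  (hasFDerivAt_iff_hasGradientAt.mp (hasFDerivAt_sliceX f hf)).gradient

lemma gradient_sliceP_eq (f : Fsp d → ℝ) {x p : Ed d} {m : ℝ}
    (hf : DifferentiableAt ℝ f (x, p, m)) :
    gradient (fun p' : Ed d => f (x, p', m)) p =
      (InnerProductSpace.toDual ℝ (Ed d)).symm
        ((fderiv ℝ f (x, p, m)).comp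
          ((ContinuousLinearMap.inr ℝ (Ed d) (Ed d × ℝ)).comp
            (ContinuousLinearMap.inl ℝ (Ed d) ℝ))) :=
  (hasFDerivAt_iff_hasGradientAt.mp (hasFDerivAt_sliceP f hf)).gradient

lemma dot_toDual_symm (L : Ed d →L[ℝ] ℝ) (w : Ed d) :
    dotE ((InnerProductSpace.toDual ℝ (Ed d)).symm L) w = L w :=
  InnerProductSpace.toDual_symm_apply

lemma dot_gradient_sliceX (f : Fsp d → ℝ) {x p : Ed d} {m : ℝ}
    (hf : DifferentiableAt ℝ f (x, p, m)) (w : Ed d) :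
    dotE (gradient (fun x' : Ed d => f (x', p, m)) x) w = fderiv ℝ f (x, p, m) (w, 0, 0) := by
  rw [gradient_sliceX_eq f hf, dot_toDual_symm]
  rfl

lemma dot_gradient_sliceP (f : Fsp d → ℝ) {x p : Ed d} {m : ℝ}
    (hf : DifferentiableAt ℝ f (x, p, m)) (w : Ed d) :
    dotE (gradient (fun p' : Ed d => f (x, p', m)) p) w = fderiv ℝ f (x, p, m) (0, w, 0) := by
  rw [gradient_sliceP_eq f hf, dot_toDual_symm]
  rfl

lemma hasFDerivAt_clm_apply_const {X Y : Type*} [NormedAddCommGroup X] [NormedSpace ℝ X]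
    [NormedAddCommGroup Y] [NormedSpace ℝ Y]
    {f : X → (Y →L[ℝ] G)} {z : X} (hf : DifferentiableAt ℝ f z) (c : Y) :
    HasFDerivAt (fun z' => f z' c) ((fderiv ℝ f z).flip c) z := by
  have h := hf.hasFDerivAt.clm_apply (hasFDerivAt_const c z)
  convert h using 1
  ext v
  simp

/-- The shear map `(v,t) ↦ (v, L(v,t))` as a continuous linear equivalence,
when `L(0,1) ≠ 0`. -/
def shearEquiv {d : ℕ} (L : (Ed d × ℝ) →L[ℝ] ℝ) (hc : L (0, 1) ≠ 0) :
    (Ed d × ℝ) ≃L[ℝ] (Ed d × ℝ) := by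
  refine ContinuousLinearEquiv.equivOfInverse
    ((ContinuousLinearMap.fst ℝ (Ed d) ℝ).prod L)
    ((ContinuousLinearMap.fst ℝ (Ed d) ℝ).prod
      ((L (0, 1))⁻¹ • (ContinuousLinearMap.snd ℝ (Ed d) ℝ -
        L.comp ((ContinuousLinearMap.fst ℝ (Ed d) ℝ).prod 0)))) ?_ ?_
  · rintro ⟨v, t⟩
    have hdec : L (v, t) = L (v, 0) + t * L (0, 1) := by
      have h1 : ((v, t) : Ed d × ℝ) = (v, 0) + t • ((0 : Ed d), (1 : ℝ)) := by
        simp [Prod.ext_iff]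
    
      rw [h1, map_add, L.map_smul, smul_eq_mul]
    simp only [ContinuousLinearMap.prod_apply, ContinuousLinearMap.coe_fst',
      ContinuousLinearMap.smul_apply, ContinuousLinearMap.sub_apply,
      ContinuousLinearMap.coe_snd', ContinuousLinearMap.comp_apply,
      ContinuousLinearMap.zero_apply, smul_eq_mul]
    refine Prod.ext rfl ?_
    simp only [hdec]
    field_simp
    ring
  · rintro ⟨v, u⟩
    have hdec : ∀ t : ℝ, L (v, t) = L (v, 0) + t * L (0, 1) := by
      intro t
      have h1 : ((v, t) : Ed d × ℝ) = (v, 0) + t • ((0 : Ed d), (1 : ℝ)) := by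
        simp [Prod.ext_iff]
      rw [h1, map_add, L.map_smul, smul_eq_mul]
    simp only [ContinuousLinearMap.prod_apply, ContinuousLinearMap.coe_fst',
      ContinuousLinearMap.smul_apply, ContinuousLinearMap.sub_apply,
      ContinuousLinearMap.coe_snd', ContinuousLinearMap.comp_apply,
      ContinuousLinearMap.zero_apply, smul_eq_mul]
    refine Prod.ext rfl ?_
    rw [hdec]
    field_simp
    ring

/-- The "sharp" isomorphism `Dual ℝ E ≃ E` as an `ℝ`-continuous linear map. -/
def sharpL (d : ℕ) : StrongDual ℝ (Ed d) →L[ℝ] Ed d :=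
  LinearMap.mkContinuous
    { toFun := fun ℓ => (InnerProductSpace.toDual ℝ (Ed d)).symm ℓ
      map_add' := fun a b => map_add _ a b
      map_smul' := fun c a => by simp }
    1 (fun ℓ => by
      simp [(InnerProductSpace.toDual ℝ (Ed d)).symm.norm_map])

@[simp] lemma sharpL_apply {d : ℕ} (ℓ : StrongDual ℝ (Ed d)) :
    sharpL d ℓ = (InnerProductSpace.toDual ℝ (Ed d)).symm ℓ := rfl

lemma shearEquiv_symm_apply {d : ℕ} (L : (Ed d × ℝ) →L[ℝ] ℝ) (hc : L (0, 1) ≠ 0)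
    (v : Ed d) (u : ℝ) :
    (shearEquiv L hc).symm (v, u) = (v, (L (0, 1))⁻¹ * (u - L (v, 0))) := by
  rw [shearEquiv, ContinuousLinearEquiv.symm_equivOfInverse,
    ContinuousLinearEquiv.equivOfInverse_apply]
  simp

lemma shearEquiv_coe {d : ℕ} (L : (Ed d × ℝ) →L[ℝ] ℝ) (hc : L (0, 1) ≠ 0) :
    ((shearEquiv L hc) : (Ed d × ℝ) →L[ℝ] (Ed d × ℝ)) =
      (ContinuousLinearMap.fst ℝ (Ed d) ℝ).prod L := rfl

/-- The strict derivative of `q ↦ (q.1, Hinv x q.1 q.2)`. -/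
lemma hasStrictFDerivAt_psi {d : ℕ} (H : Ed d → Ed d → ℝ → ℝ) (Hinv : Ed d → Ed d → ℝ → ℝ)
    (x p : Ed d) {m s : ℝ} (hm0 : 0 < m) (hs : H x p m = s)
    (hInv₁ : ∀ (p' : Ed d) (m' : ℝ), 0 < m' → Hinv x p' (H x p' m') = m')
    {L : (Ed d × ℝ) →L[ℝ] ℝ}
    (hst : HasStrictFDerivAt (fun q : Ed d × ℝ => H x q.1 q.2) L (p, m))
    (hc : L (0, 1) ≠ 0) :
    HasStrictFDerivAt (fun q : Ed d × ℝ => (q.1, Hinv x q.1 q.2))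
      (((shearEquiv L hc).symm : (Ed d × ℝ) →L[ℝ] (Ed d × ℝ))) (p, s) := by
  have hφ : HasStrictFDerivAt (fun q : Ed d × ℝ => (q.1, H x q.1 q.2))
      ((shearEquiv L hc : (Ed d × ℝ) →L[ℝ] (Ed d × ℝ))) (p, m) := by
    rw [shearEquiv_coe]
    exact HasStrictFDerivAt.prodMk (hasStrictFDerivAt_fst (E := Ed d) (F := ℝ)) hst
  have hev : ∀ᶠ q in 𝓝 ((p, m) : Ed d × ℝ),
      (fun q : Ed d × ℝ => ((q.1, Hinv x q.1 q.2) : Ed d × ℝ)) (q.1, H x q.1 q.2) = q := by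
    have hopen : IsOpen {q : Ed d × ℝ | 0 < q.2} := isOpen_lt continuous_const continuous_snd
    filter_upwards [hopen.mem_nhds (by simpa using hm0)] with q hq
    exact Prod.ext rfl (hInv₁ q.1 q.2 hq)
  have h := hφ.to_local_left_inverse (g := fun q : Ed d × ℝ => ((q.1, Hinv x q.1 q.2) : Ed d × ℝ)) hev
  rw [show (((p, m).1, H x (p, m).1 (p, m).2) : Ed d × ℝ) = ((p, s) : Ed d × ℝ) by
    simp [hs]] at h
  exact h

end AuxEMFG

set_option maxHeartbeats 2000000 in
/-- identity (3.4) of Lemma 3.2: the radial derivative of the first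
order coefficient `b` in the gradient variables `q = (p,s)`. -/
theorem bcoef_radial_derivative (d : ℕ)
    (H : Ed d → Ed d → ℝ → ℝ) (B : Ed d → Ed d → ℝ → Ed d)
    (HC2 : ContDiffOn ℝ 2 (fun z : Ed d × Ed d × ℝ => H z.1 z.2.1 z.2.2)
      (univ ×ˢ univ ×ˢ Ioi 0))
    (BC2 : ContDiffOn ℝ 2 (fun z : Ed d × Ed d × ℝ => B z.1 z.2.1 z.2.2)
      (univ ×ˢ univ ×ˢ Ioi 0))
    (Hm_neg : ∀ (x p : Ed d) (m : ℝ), 0 < m → dm H x p m < 0)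
    (Hinv : Ed d → Ed d → ℝ → ℝ)
    (hInv₁ : ∀ (x p : Ed d) (m : ℝ), 0 < m → Hinv x p (H x p m) = m)
    (hInv₂ : ∀ (x p : Ed d) (s : ℝ), 0 < Hinv x p s ∧ H x p (Hinv x p s) = s) :
    ∀ (x p : Ed d) (s : ℝ) (m ζ : ℝ), m = Hinv x p s →
      ζ = -s + dotE (gradp H x p m) p →
      (fderiv ℝ (fun q : Ed d × ℝ => bQ H B Hinv x q.1 q.2) (p, s)) (p, s) =
        (-(dotE (vdm B x p m)
            (hesspx H x p m p - ((dm H x p m)⁻¹ * ζ) • gradxdm H x p m)) -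
          dotE (gradx H x p m)
            (jacpdm B x p m p - ((dm H x p m)⁻¹ * ζ) • vdmm B x p m) +
          dm H x p m * (dotE (gradient (fun p' => divx B x p' m) p) p -
            divxdm B x p m * ((dm H x p m)⁻¹ * ζ)) +
          divx B x p m * (dotE (gradpdm H x p m) p -
            dmm H x p m * ((dm H x p m)⁻¹ * ζ))) := by
  intro x p s m ζ hmdef hζdef
  subst hmdef
  subst hζdef
  have hm0 : 0 < (Hinv x p s) := (hInv₂ x p s).1
  have hHs : H x p (Hinv x p s) = s := (hInv₂ x p s).2
  set hf : Fsp d → ℝ := fun z => H z.1 z.2.1 z.2.2 with hhf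
  set bf : Fsp d → Ed d := fun z => B z.1 z.2.1 z.2.2 with hbf
  have hUo : IsOpen (univ ×ˢ univ ×ˢ Ioi (0:ℝ) : Set (Fsp d)) :=
    isOpen_univ.prod (isOpen_univ.prod isOpen_Ioi)
  have hmem : ∀ (x' p' : Ed d) (m' : ℝ), 0 < m' →
      ((x', p', m') : Fsp d) ∈ (univ ×ˢ univ ×ˢ Ioi (0:ℝ) : Set (Fsp d)) :=
    fun x' p' m' h' => ⟨mem_univ _, mem_univ _, h'⟩
  have hH2 : ∀ (x' p' : Ed d) (m' : ℝ), 0 < m' → ContDiffAt ℝ 2 hf (x', p', m') :=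
    fun x' p' m' h' => HC2.contDiffAt (hUo.mem_nhds (hmem x' p' m' h'))
  have hB2 : ∀ (x' p' : Ed d) (m' : ℝ), 0 < m' → ContDiffAt ℝ 2 bf (x', p', m') :=
    fun x' p' m' h' => BC2.contDiffAt (hUo.mem_nhds (hmem x' p' m' h'))
  have hHd : ∀ (x' p' : Ed d) (m' : ℝ), 0 < m' → DifferentiableAt ℝ hf (x', p', m') :=
    fun x' p' m' h' => (hH2 x' p' m' h').differentiableAt (by norm_num)
  have hBd : ∀ (x' p' : Ed d) (m' : ℝ), 0 < m' → DifferentiableAt ℝ bf (x', p', m') :=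
    fun x' p' m' h' => (hB2 x' p' m' h').differentiableAt (by norm_num)
  -- first-order identities
  have hdm : ∀ (x' p' : Ed d) (m' : ℝ), 0 < m' →
      dm H x' p' m' = fderiv ℝ hf (x', p', m') (0, 0, 1) :=
    fun x' p' m' h' => (hasDerivAt_sliceM hf (hHd x' p' m' h')).deriv
  have hvdm : ∀ (x' p' : Ed d) (m' : ℝ), 0 < m' →
      vdm B x' p' m' = fderiv ℝ bf (x', p', m') (0, 0, 1) :=
    fun x' p' m' h' => (hasDerivAt_sliceM bf (hBd x' p' m' h')).deriv
  set inlE := ContinuousLinearMap.inl ℝ (Ed d) (Ed d × ℝ) with hinlE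
  set inrE := ContinuousLinearMap.inr ℝ (Ed d) (Ed d × ℝ) with hinrE
  set inP : Ed d →L[ℝ] Fsp d := inrE.comp (ContinuousLinearMap.inl ℝ (Ed d) ℝ) with hinP
  have hgradx : ∀ (x' p' : Ed d) (m' : ℝ), 0 < m' →
      gradx H x' p' m' = (InnerProductSpace.toDual ℝ (Ed d)).symm
        ((fderiv ℝ hf (x', p', m')).comp inlE) :=
    fun x' p' m' h' => gradient_sliceX_eq hf (hHd x' p' m' h')
  have hgradp_dot : dotE (gradp H x p (Hinv x p s)) p = fderiv ℝ hf (x, p, (Hinv x p s)) (0, p, 0) :=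
    dot_gradient_sliceP hf (hHd x p (Hinv x p s) hm0) p
  have hjacx : ∀ (x' p' : Ed d) (m' : ℝ), 0 < m' →
      jacx B x' p' m' = (fderiv ℝ bf (x', p', m')).comp inlE :=
    fun x' p' m' h' => (hasFDerivAt_sliceX bf (hBd x' p' m' h')).fderiv
  have hdivx : ∀ (x' p' : Ed d) (m' : ℝ), 0 < m' →
      divx B x' p' m' =
        ∑ i, (fderiv ℝ bf (x', p', m') (EuclideanSpace.single i 1, 0, 0)) i := by
    intro x' p' m' h'
    rw [show divx B x' p' m' =
        ∑ i, (jacx B x' p' m' (EuclideanSpace.single i 1)) i from rfl,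
      hjacx x' p' m' h']
    rfl
  -- second-order data
  have hDh1 : DifferentiableAt ℝ (fderiv ℝ hf) (x, p, (Hinv x p s)) :=
    ((hH2 x p (Hinv x p s) hm0).fderiv_right (m := 1) (by norm_num)).differentiableAt one_ne_zero
  have hDb1 : DifferentiableAt ℝ (fderiv ℝ bf) (x, p, (Hinv x p s)) :=
    ((hB2 x p (Hinv x p s) hm0).fderiv_right (m := 1) (by norm_num)).differentiableAt one_ne_zero
  set D2h := fderiv ℝ (fderiv ℝ hf) (x, p, (Hinv x p s)) with hD2h
  set D2b := fderiv ℝ (fderiv ℝ bf) (x, p, (Hinv x p s)) with hD2b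
  have hsymH : ∀ v w : Fsp d, D2h v w = D2h w v :=
    (hH2 x p (Hinv x p s) hm0).isSymmSndFDerivAt (by simp)
  have hsymB : ∀ v w : Fsp d, D2b v w = D2b w v :=
    (hB2 x p (Hinv x p s) hm0).isSymmSndFDerivAt (by simp)
  set shC : StrongDual ℝ (Ed d) →L[ℝ] Ed d := sharpL d with hshC
  set preX : (Fsp d →L[ℝ] ℝ) →L[ℝ] (Ed d →L[ℝ] ℝ) :=
    (ContinuousLinearMap.compL ℝ (Ed d) (Fsp d) ℝ).flip inlE with hpreX
  have happ : ∀ M : Fsp d →L[ℝ] ℝ,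
      shC (preX M) = (InnerProductSpace.toDual ℝ (Ed d)).symm (M.comp inlE) := by
    intro M
    simp [hshC, hpreX]
  have hmemq : {q : Ed d × ℝ | 0 < q.2} ∈ 𝓝 ((p, (Hinv x p s)) : Ed d × ℝ) :=
    (isOpen_lt continuous_const continuous_snd).mem_nhds (by simpa using hm0)
  -- derivative of q ↦ gradx H x q.1 q.2
  have hgradxF : HasFDerivAt (fun z : Fsp d => shC (preX (fderiv ℝ hf z)))
      ((shC.comp preX).comp D2h) (x, p, (Hinv x p s)) := by
    have h1 := ((shC.comp preX).hasFDerivAt).comp (x, p, (Hinv x p s)) hDh1.hasFDerivAt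
    exact h1
  have hg1 : HasFDerivAt (fun q : Ed d × ℝ => gradx H x q.1 q.2)
      (((shC.comp preX).comp D2h).comp inrE) (p, (Hinv x p s)) := by
    have h2 := hgradxF.comp (p, (Hinv x p s)) (hasFDerivAt_iotaPM x p (Hinv x p s))
    refine h2.congr_of_eventuallyEq ?_
    filter_upwards [hmemq] with q hq
    simp only [Function.comp]
    rw [hgradx x q.1 q.2 hq, happ]
  -- derivative of q ↦ vdm B x q.1 q.2
  have hvdmF : HasFDerivAt (fun z : Fsp d => fderiv ℝ bf z ((0 : Ed d), (0 : Ed d), (1:ℝ)))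
      (D2b.flip (0, 0, 1)) (x, p, (Hinv x p s)) := hasFDerivAt_clm_apply_const hDb1 _
  have hg2 : HasFDerivAt (fun q : Ed d × ℝ => vdm B x q.1 q.2)
      ((D2b.flip (0, 0, 1)).comp inrE) (p, (Hinv x p s)) := by
    have h2 := hvdmF.comp (p, (Hinv x p s)) (hasFDerivAt_iotaPM x p (Hinv x p s))
    refine h2.congr_of_eventuallyEq ?_
    filter_upwards [hmemq] with q hq
    exact hvdm x q.1 q.2 hq
  -- derivative of q ↦ dm H x q.1 q.2
  have hdmF : HasFDerivAt (fun z : Fsp d => fderiv ℝ hf z ((0 : Ed d), (0 : Ed d), (1:ℝ)))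
      (D2h.flip (0, 0, 1)) (x, p, (Hinv x p s)) := hasFDerivAt_clm_apply_const hDh1 _
  have hg3 : HasFDerivAt (fun q : Ed d × ℝ => dm H x q.1 q.2)
      ((D2h.flip (0, 0, 1)).comp inrE) (p, (Hinv x p s)) := by
    have h2 := hdmF.comp (p, (Hinv x p s)) (hasFDerivAt_iotaPM x p (Hinv x p s))
    refine h2.congr_of_eventuallyEq ?_
    filter_upwards [hmemq] with q hq
    exact hdm x q.1 q.2 hq
  -- derivative of q ↦ divx B x q.1 q.2
  have hfdivF : HasFDerivAt
      (fun z : Fsp d => ∑ i, (fderiv ℝ bf z (EuclideanSpace.single i 1, 0, 0)) i)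
      (∑ i, (EuclideanSpace.proj i).comp (D2b.flip (EuclideanSpace.single i 1, 0, 0)))
      (x, p, (Hinv x p s)) := by
    refine HasFDerivAt.fun_sum fun i _ => ?_
    have h1 := hasFDerivAt_clm_apply_const hDb1
      ((EuclideanSpace.single i 1, 0, 0) : Fsp d)
    have h2 := ((EuclideanSpace.proj (𝕜 := ℝ) i).hasFDerivAt).comp (x, p, (Hinv x p s)) h1
    exact h2
  have hg4 : HasFDerivAt (fun q : Ed d × ℝ => divx B x q.1 q.2)
      ((∑ i, (EuclideanSpace.proj i).comp
        (D2b.flip (EuclideanSpace.single i 1, 0, 0))).comp inrE) (p, (Hinv x p s)) := by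
    have h2 := hfdivF.comp (p, (Hinv x p s)) (hasFDerivAt_iotaPM x p (Hinv x p s))
    refine h2.congr_of_eventuallyEq ?_
    filter_upwards [hmemq] with q hq
    exact hdivx x q.1 q.2 hq
  -- the inverse map ψ
  set L : (Ed d × ℝ) →L[ℝ] ℝ := (fderiv ℝ hf (x, p, (Hinv x p s))).comp inrE with hL
  have hLm : L (0, 1) = fderiv ℝ hf (x, p, (Hinv x p s)) (0, 0, 1) := rfl
  have hcne : L (0, 1) ≠ 0 := by
    rw [hLm, ← hdm x p (Hinv x p s) hm0]
    exact (Hm_neg x p (Hinv x p s) hm0).ne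
  have hslicePM : HasFDerivAt (fun q : Ed d × ℝ => H x q.1 q.2) L (p, (Hinv x p s)) :=
    hasFDerivAt_slicePM hf (hHd x p (Hinv x p s) hm0)
  have hslice2 : ContDiffAt ℝ 2 (fun q : Ed d × ℝ => H x q.1 q.2) (p, (Hinv x p s)) := by
    have hι : ContDiffAt ℝ 2 (fun q : Ed d × ℝ => ((x, q.1, q.2) : Fsp d)) (p, (Hinv x p s)) :=
      (contDiff_const.prodMk contDiff_id).contDiffAt
    exact (hH2 x p (Hinv x p s) hm0).comp (p, (Hinv x p s)) hι
  have hstrict : HasStrictFDerivAt (fun q : Ed d × ℝ => H x q.1 q.2) L (p, (Hinv x p s)) := by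
    have h1 := hslice2.hasStrictFDerivAt (by norm_num)
    have e : fderiv ℝ (fun q : Ed d × ℝ => H x q.1 q.2) (p, (Hinv x p s)) = L := hslicePM.fderiv
    rwa [e] at h1
  have hψ : HasFDerivAt (fun q : Ed d × ℝ => ((q.1, Hinv x q.1 q.2) : Ed d × ℝ))
      (((shearEquiv L hcne).symm : (Ed d × ℝ) →L[ℝ] (Ed d × ℝ))) (p, s) :=
    (hasStrictFDerivAt_psi H Hinv x p hm0 hHs
      (fun p' m' h' => hInv₁ x p' m' h') hstrict hcne).hasFDerivAt
  -- assembling the full derivative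
  have hG := ((hg1.inner (𝕜 := ℝ) hg2).neg).add (hg3.mul hg4)
  have hbQ' := hG.comp (p, s) hψ
  have hequ : (fun q : Ed d × ℝ => bQ H B Hinv x q.1 q.2) =ᶠ[𝓝 ((p, s) : Ed d × ℝ)]
      ((fun q : Ed d × ℝ => -(dotE (gradx H x q.1 q.2) (vdm B x q.1 q.2)) +
          dm H x q.1 q.2 * divx B x q.1 q.2) ∘
        (fun q : Ed d × ℝ => ((q.1, Hinv x q.1 q.2) : Ed d × ℝ))) :=
    Filter.Eventually.of_forall fun q => rfl
  have hbQ := hbQ'.congr_of_eventuallyEq hequ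
  -- identities for the second-order coefficients appearing on the RHS
  have hdot1 : ∀ (N : Ed d →L[ℝ] ℝ) (w : Ed d),
      (inner ℝ ((InnerProductSpace.toDual ℝ (Ed d)).symm N) w : ℝ) = N w :=
    fun N w => InnerProductSpace.toDual_symm_apply
  have hdot2 : ∀ (N : Ed d →L[ℝ] ℝ) (w : Ed d),
      (inner ℝ w ((InnerProductSpace.toDual ℝ (Ed d)).symm N) : ℝ) = N w := fun N w => by
    rw [real_inner_comm]; exact InnerProductSpace.toDual_symm_apply
  have hhesspx : hesspx H x p (Hinv x p s) = ((shC.comp preX).comp D2h).comp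
      ((ContinuousLinearMap.inr ℝ (Ed d) (Ed d × ℝ)).comp
        (ContinuousLinearMap.inl ℝ (Ed d) ℝ)) := by
    have h1 := hgradxF.comp p (hasFDerivAt_iotaP x p (Hinv x p s))
    have h2 := h1.congr_of_eventuallyEq (Filter.Eventually.of_forall
      (fun p' : Ed d => by
        show gradx H x p' (Hinv x p s) = _
        rw [hgradx x p' (Hinv x p s) hm0]
        exact (happ _).symm))
    exact h2.fderiv
  have hgradxdm_pt : gradxdm H x p (Hinv x p s) =
      (InnerProductSpace.toDual ℝ (Ed d)).symm ((D2h.flip (0, 0, 1)).comp inlE) := by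
    rw [show gradxdm H x p (Hinv x p s) =
        gradient (fun x' => dm H x' p (Hinv x p s)) x from rfl,
      show (fun x' => dm H x' p (Hinv x p s)) =
        (fun x' => (fun z : Fsp d => fderiv ℝ hf z (0, 0, 1)) (x', p, (Hinv x p s))) from
        funext fun x' => hdm x' p (Hinv x p s) hm0,
      gradient_sliceX_eq _ hdmF.differentiableAt, hdmF.fderiv]
  have hgradpdm_dot : dotE (gradpdm H x p (Hinv x p s)) p = D2h (0, p, 0) (0, 0, 1) := by
    rw [show gradpdm H x p (Hinv x p s) =
        gradient (fun p' => dm H x p' (Hinv x p s)) p from rfl,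
      show (fun p' => dm H x p' (Hinv x p s)) =
        (fun p' => (fun z : Fsp d => fderiv ℝ hf z (0, 0, 1)) (x, p', (Hinv x p s))) from
        funext fun p' => hdm x p' (Hinv x p s) hm0,
      dot_gradient_sliceP _ hdmF.differentiableAt, hdmF.fderiv]
    rfl
  have hdmm_pt : dmm H x p (Hinv x p s) = D2h (0, 0, 1) (0, 0, 1) := by
    have e1 : (fun m' => dm H x p m') =ᶠ[𝓝 (Hinv x p s)]
        (fun m' => (fun z : Fsp d => fderiv ℝ hf z (0, 0, 1)) (x, p, m')) := by
      filter_upwards [isOpen_Ioi.mem_nhds hm0] with m' hm'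
      exact hdm x p m' hm'
    rw [show dmm H x p (Hinv x p s) = deriv (fun m' => dm H x p m') (Hinv x p s) from rfl,
      e1.deriv_eq, (hasDerivAt_sliceM _ hdmF.differentiableAt).deriv, hdmF.fderiv]
    rfl
  have hvdmm_pt : vdmm B x p (Hinv x p s) = D2b (0, 0, 1) (0, 0, 1) := by
    have e1 : (fun m' => vdm B x p m') =ᶠ[𝓝 (Hinv x p s)]
        (fun m' => (fun z : Fsp d => fderiv ℝ bf z (0, 0, 1)) (x, p, m')) := by
      filter_upwards [isOpen_Ioi.mem_nhds hm0] with m' hm'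
      exact hvdm x p m' hm'
    rw [show vdmm B x p (Hinv x p s) = deriv (fun m' => vdm B x p m') (Hinv x p s) from rfl,
      e1.deriv_eq, (hasDerivAt_sliceM _ hvdmF.differentiableAt).deriv, hvdmF.fderiv]
    rfl
  have hjacpdm_pt : jacpdm B x p (Hinv x p s) = (D2b.flip (0, 0, 1)).comp
      ((ContinuousLinearMap.inr ℝ (Ed d) (Ed d × ℝ)).comp
        (ContinuousLinearMap.inl ℝ (Ed d) ℝ)) := by
    rw [show jacpdm B x p (Hinv x p s) =
        fderiv ℝ (fun p' => vdm B x p' (Hinv x p s)) p from rfl,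
      show (fun p' => vdm B x p' (Hinv x p s)) =
        (fun p' => (fun z : Fsp d => fderiv ℝ bf z (0, 0, 1)) (x, p', (Hinv x p s))) from
        funext fun p' => hvdm x p' (Hinv x p s) hm0,
      (hasFDerivAt_sliceP _ hvdmF.differentiableAt).fderiv, hvdmF.fderiv]
  have hdivxdm_pt : divxdm B x p (Hinv x p s) =
      ∑ i, (D2b (EuclideanSpace.single i 1, 0, 0) (0, 0, 1)) i := by
    have hjxdm : jacxdm B x p (Hinv x p s) = (D2b.flip (0, 0, 1)).comp inlE := by
      rw [show jacxdm B x p (Hinv x p s) =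
          fderiv ℝ (fun x' => vdm B x' p (Hinv x p s)) x from rfl,
        show (fun x' => vdm B x' p (Hinv x p s)) =
          (fun x' => (fun z : Fsp d => fderiv ℝ bf z (0, 0, 1)) (x', p, (Hinv x p s))) from
          funext fun x' => hvdm x' p (Hinv x p s) hm0,
        (hasFDerivAt_sliceX _ hvdmF.differentiableAt).fderiv, hvdmF.fderiv]
    rw [show divxdm B x p (Hinv x p s) =
        ∑ i, (jacxdm B x p (Hinv x p s) (EuclideanSpace.single i 1)) i from rfl, hjxdm]
    rfl
  have hgraddiv_dot : dotE (gradient (fun p' => divx B x p' (Hinv x p s)) p) p =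
      ∑ i, (D2b (0, p, 0) (EuclideanSpace.single i 1, 0, 0)) i := by
    rw [show (fun p' => divx B x p' (Hinv x p s)) =
        (fun p' => (fun z : Fsp d =>
          ∑ i, (fderiv ℝ bf z (EuclideanSpace.single i 1, 0, 0)) i) (x, p', (Hinv x p s))) from
        funext fun p' => hdivx x p' (Hinv x p s) hm0,
      dot_gradient_sliceP _ hfdivF.differentiableAt, hfdivF.fderiv]
    simp
  -- evaluating the derivative
  rw [hbQ.fderiv, ContinuousLinearMap.comp_apply,
    show (((shearEquiv L hcne).symm : (Ed d × ℝ) →L[ℝ] Ed d × ℝ)) ((p, s) : Ed d × ℝ) =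
      ((p, (L (0, 1))⁻¹ * (s - L (p, 0))) : Ed d × ℝ) from shearEquiv_symm_apply L hcne p s]
  have hvec : inrE ((p, (L (0, 1))⁻¹ * (s - L (p, 0))) : Ed d × ℝ) =
      ((0, p, 0) : Fsp d) + ((L (0, 1))⁻¹ * (s - L (p, 0))) • ((0, 0, 1) : Fsp d) := by
    simp [hinrE, Prod.ext_iff]
  simp only [ContinuousLinearMap.add_apply, ContinuousLinearMap.neg_apply,
    ContinuousLinearMap.comp_apply, ContinuousLinearMap.smul_apply,
    ContinuousLinearMap.prod_apply, ContinuousLinearMap.sum_apply,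
    ContinuousLinearMap.flip_apply, fderivInnerCLM_apply, smul_eq_mul]
  rw [hvec]
  simp only [map_add, _root_.map_smul, ContinuousLinearMap.add_apply,
    ContinuousLinearMap.smul_apply, smul_eq_mul]
  have hgradx_pt := hgradx x p (Hinv x p s) hm0
  have hvdm_pt := hvdm x p (Hinv x p s) hm0
  have hdm_pt := hdm x p (Hinv x p s) hm0
  have hdivx_pt := hdivx x p (Hinv x p s) hm0
  have hLp : L (p, 0) = fderiv ℝ hf (x, p, Hinv x p s) (0, p, 0) := rfl
  rw [hgradpdm_dot, hdmm_pt, hvdmm_pt, hjacpdm_pt, hdivxdm_pt, hgraddiv_dot, hhesspx,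
    hgradxdm_pt, hgradp_dot, hgradx_pt, hvdm_pt, hdm_pt, hdivx_pt]
  simp only [dotE, ContinuousLinearMap.comp_apply, ContinuousLinearMap.flip_apply,
    ContinuousLinearMap.inr_apply, ContinuousLinearMap.inl_apply,
    inner_sub_right, real_inner_smul_right, inner_add_left, real_inner_smul_left,
    happ, hdot1, hdot2, PiLp.proj_apply, hLm, hLp, smul_eq_mul, map_sub, map_add]
  rw [hsymH (inlE ((fderiv ℝ bf (x, p, Hinv x p s)) (0, 0, 1))) ((0, 0, 1) : Fsp d)]
  rw [show (∑ i, (D2b (EuclideanSpace.single i 1, 0, 0)) ((0 : Ed d), (0 : Ed d), (1:ℝ)) i) =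
      ∑ i, (D2b ((0 : Ed d), (0 : Ed d), (1:ℝ))) (EuclideanSpace.single i 1, 0, 0) i from
    Finset.sum_congr rfl fun i _ => by rw [hsymB]]
  simp only [Finset.sum_add_distrib, ← Finset.mul_sum, smul_eq_mul, map_add, map_sub,
    _root_.map_smul, ContinuousLinearMap.add_apply, ContinuousLinearMap.sub_apply,
    ContinuousLinearMap.smul_apply]
  ring



end EMFG
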